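/- arXiv:2502.14166 — 3 statements merged into one kernel-verified Lean document; each statement's English description precedes it below -/
import Mathlib

section
/- Let (X_i, Y_i), i = 1,...,n, be iid pairs and X̃_i, i = 1,...,N, be iid copies of X_1 independent of the labeled sample, with σ² = Var(Y_1) < ∞, τ² = Var(f(X_1)) < ∞ and γ = Cov(f(X_1), Y_1), where τ² > 0. For λ ∈ ℝ define θ̂_λ = Ȳ + λ(Z̃^f − Z̄^f), where Ȳ = (1/n)Σ Y_i, Z̄^f = (1/n)Σ f(X_i), Z̃^f = (1/N)Σ f(X̃_i). Then Var(θ̂_λ) = σ²/n + ((n+N)/(nN))λ²τ² − (2/n)λγ; this variance is uniquely minimized over λ ∈ ℝ at λ* = (N/(n+N))·(γ/τ²), and the minimum value equals σ²/n − (N/(n(n+N)))·(γ²/τ²). -/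
open MeasureTheory ProbabilityTheory

lemma ppi_aux_integrable_mul {Ω : Type*} [MeasurableSpace Ω] {μ : Measure Ω} [IsFiniteMeasure μ]
    {a b : Ω → ℝ} (ha : MemLp a 2 μ) (hb : MemLp b 2 μ) :
    Integrable (fun ω => a ω * b ω) μ := by
  have h := (((ha.add hb).integrable_sq.sub ha.integrable_sq).sub hb.integrable_sq).div_const 2
  have heq : (fun ω => a ω * b ω)
      = fun ω => (((a + b) ω) ^ 2 - a ω ^ 2 - b ω ^ 2) / 2 := by
    funext ω; simp [Pi.add_apply]; ring
  rw [heq]; exact h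

lemma ppi_aux_var_lin {Ω : Type*} [MeasurableSpace Ω] (μ : Measure Ω) [IsProbabilityMeasure μ]
    (a b : Ω → ℝ) (ha : MemLp a 2 μ) (hb : MemLp b 2 μ) (lam : ℝ) :
    variance (fun ω => a ω - lam * b ω) μ
      = variance a μ + lam ^ 2 * variance b μ
        - 2 * lam * ∫ ω, (b ω - ∫ ω', b ω' ∂μ) * (a ω - ∫ ω', a ω' ∂μ) ∂μ := by
  have Ia := ha.integrable one_le_two
  have Ib := hb.integrable one_le_two
  have Iab := ppi_aux_integrable_mul hb ha
  have hW : MemLp (fun ω => a ω - lam * b ω) 2 μ := ha.sub (hb.const_mul lam)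
  have hcov : (∫ ω, (b ω - ∫ ω', b ω' ∂μ) * (a ω - ∫ ω', a ω' ∂μ) ∂μ)
      = (∫ ω, b ω * a ω ∂μ) - (∫ ω', b ω' ∂μ) * (∫ ω', a ω' ∂μ) := by
    have heq : ∀ ω, (b ω - ∫ ω', b ω' ∂μ) * (a ω - ∫ ω', a ω' ∂μ)
        = b ω * a ω - ((∫ ω', b ω' ∂μ) * a ω + (∫ ω', a ω' ∂μ) * b ω
            - (∫ ω', b ω' ∂μ) * (∫ ω', a ω' ∂μ)) := by intro ω; ring
    simp_rw [heq]
    have h1 : Integrable (fun ω => (∫ ω', b ω' ∂μ) * a ω + (∫ ω', a ω' ∂μ) * b ω) μ :=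
      (Ia.const_mul _).add (Ib.const_mul _)
    have h2 : Integrable (fun ω => (∫ ω', b ω' ∂μ) * a ω + (∫ ω', a ω' ∂μ) * b ω
        - (∫ ω', b ω' ∂μ) * (∫ ω', a ω' ∂μ)) μ := h1.sub (integrable_const _)
    rw [integral_sub Iab h2, integral_sub h1 (integrable_const _),
      integral_add (Ia.const_mul _) (Ib.const_mul _), integral_const_mul, integral_const_mul,
      integral_const]
    simp [measure_univ]
    ring
  have hsq : ∀ ω, (a ω - lam * b ω) ^ 2
      = a ω ^ 2 + lam ^ 2 * b ω ^ 2 - 2 * lam * (b ω * a ω) := by intro ω; ring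
  rw [variance_eq_sub hW, variance_eq_sub ha, variance_eq_sub hb]
  simp only [Pi.pow_apply]
  rw [show (∫ ω, (a ω - lam * b ω) ^ 2 ∂μ)
      = ∫ ω, (a ω ^ 2 + lam ^ 2 * b ω ^ 2 - 2 * lam * (b ω * a ω)) ∂μ from by simp_rw [hsq]]
  have h3 : Integrable (fun ω => a ω ^ 2 + lam ^ 2 * b ω ^ 2) μ :=
    ha.integrable_sq.add (hb.integrable_sq.const_mul _)
  have h4 : Integrable (fun ω => lam * b ω) μ := Ib.const_mul _
  rw [integral_sub h3 (Iab.const_mul _),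
    integral_add ha.integrable_sq (hb.integrable_sq.const_mul _), integral_const_mul,
    integral_const_mul, integral_sub Ia h4, integral_const_mul, hcov]
  ring

/-- **Variance of the power-tuned PPI estimator and optimal power-tuning** (PPI++).
With `σ² = Var(Y_1)`, `τ² = Var(f(X_1)) > 0`, `γ = Cov(f(X_1), Y_1)`, the estimator
`θ̂_λ = Ȳ + λ(Z̃^f − Z̄^f)` has `Var(θ̂_λ) = σ²/n + ((n+N)/(nN))λ²τ² − (2/n)λγ`;
this is uniquely minimized over `λ ∈ ℝ` at `λ* = (N/(n+N))·(γ/τ²)`, with minimum value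
`σ²/n − (N/(n(n+N)))·(γ²/τ²)`. -/
theorem power_tuned_ppi_variance
    {Ω : Type*} [MeasurableSpace Ω] (μ : Measure Ω) [IsProbabilityMeasure μ]
    {𝒳 : Type*} [MeasurableSpace 𝒳]
    (n N : ℕ) (hn : 0 < n) (hN : 0 < N)
    (X : Fin n → Ω → 𝒳) (Y : Fin n → Ω → ℝ) (Xt : Fin N → Ω → 𝒳)
    (f : 𝒳 → ℝ) (hf : Measurable f)
    (hXYmeas : ∀ i, Measurable (fun ω => (X i ω, Y i ω)))
    (hXtmeas : ∀ i, Measurable (Xt i))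
    (hiid : iIndepFun (fun i ω => (X i ω, Y i ω)) μ)
    (hident : ∀ i, IdentDistrib (fun ω => (X i ω, Y i ω))
      (fun ω => (X ⟨0, hn⟩ ω, Y ⟨0, hn⟩ ω)) μ μ)
    (hiidt : iIndepFun Xt μ)
    (hidentt : ∀ i, IdentDistrib (Xt i) (X ⟨0, hn⟩) μ μ)
    (hind : IndepFun (fun ω => fun i : Fin n => (X i ω, Y i ω))
      (fun ω => fun i : Fin N => Xt i ω) μ)
    (hY2 : MemLp (Y ⟨0, hn⟩) 2 μ) (hfX2 : MemLp (fun ω => f (X ⟨0, hn⟩ ω)) 2 μ)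
    (σsq τsq γ : ℝ) (hτpos : 0 < τsq)
    (hσ : variance (Y ⟨0, hn⟩) μ = σsq)
    (hτ : variance (fun ω => f (X ⟨0, hn⟩ ω)) μ = τsq)
    (hγ : ∫ ω, (f (X ⟨0, hn⟩ ω) - ∫ ω', f (X ⟨0, hn⟩ ω') ∂μ)
            * (Y ⟨0, hn⟩ ω - ∫ ω', Y ⟨0, hn⟩ ω' ∂μ) ∂μ = γ) :
    -- the power-tuned family and the optimal tuning parameter
    (∀ lam : ℝ,
      variance (fun ω => (n : ℝ)⁻¹ * ∑ i, Y i ω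
          + lam * ((N : ℝ)⁻¹ * ∑ i, f (Xt i ω) - (n : ℝ)⁻¹ * ∑ i, f (X i ω))) μ
        = σsq / n + ((n + N : ℝ) / (n * N)) * lam ^ 2 * τsq - (2 / n) * lam * γ)
    ∧ (∀ lam : ℝ, lam ≠ ((N : ℝ) / (n + N)) * (γ / τsq) →
        variance (fun ω => (n : ℝ)⁻¹ * ∑ i, Y i ω
            + (((N : ℝ) / (n + N)) * (γ / τsq))
              * ((N : ℝ)⁻¹ * ∑ i, f (Xt i ω) - (n : ℝ)⁻¹ * ∑ i, f (X i ω))) μ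
          < variance (fun ω => (n : ℝ)⁻¹ * ∑ i, Y i ω
              + lam * ((N : ℝ)⁻¹ * ∑ i, f (Xt i ω) - (n : ℝ)⁻¹ * ∑ i, f (X i ω))) μ)
    ∧ variance (fun ω => (n : ℝ)⁻¹ * ∑ i, Y i ω
        + (((N : ℝ) / (n + N)) * (γ / τsq))
          * ((N : ℝ)⁻¹ * ∑ i, f (Xt i ω) - (n : ℝ)⁻¹ * ∑ i, f (X i ω))) μ
      = σsq / n - ((N : ℝ) / (n * (n + N))) * (γ ^ 2 / τsq) := by
  have hn' : (n : ℝ) ≠ 0 := Nat.cast_ne_zero.mpr hn.ne'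
  have hN' : (N : ℝ) ≠ 0 := Nat.cast_ne_zero.mpr hN.ne'
  have hnpos : (0:ℝ) < n := Nat.cast_pos.mpr hn
  have hNpos : (0:ℝ) < N := Nat.cast_pos.mpr hN
  have hnN : (0:ℝ) < (n:ℝ) + N := by positivity
  have key : ∀ lam : ℝ,
      variance (fun ω => (n : ℝ)⁻¹ * ∑ i, Y i ω
          + lam * ((N : ℝ)⁻¹ * ∑ i, f (Xt i ω) - (n : ℝ)⁻¹ * ∑ i, f (X i ω))) μ
        = σsq / n + ((n + N : ℝ) / (n * N)) * lam ^ 2 * τsq - (2 / n) * lam * γ := by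
    intro lam
    have hgl : Measurable (fun p : 𝒳 × ℝ => p.2 - lam * f p.1) :=
      measurable_snd.sub (measurable_const.mul (hf.comp measurable_fst))
    set W : Fin n → Ω → ℝ := fun i ω => Y i ω - lam * f (X i ω) with hW_def
    have hWident : ∀ i, IdentDistrib (W i)
        (fun ω => Y ⟨0, hn⟩ ω - lam * f (X ⟨0, hn⟩ ω)) μ μ := fun i => (hident i).comp hgl
    have hW02 : MemLp (fun ω => Y ⟨0, hn⟩ ω - lam * f (X ⟨0, hn⟩ ω)) 2 μ :=
      hY2.sub (hfX2.const_mul lam)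
    have hW2 : ∀ i, MemLp (W i) 2 μ := fun i => (hWident i).symm.memLp_snd hW02
    have hWvar : ∀ i, variance (W i) μ = σsq + lam ^ 2 * τsq - 2 * lam * γ := by
      intro i
      rw [(hWident i).variance_eq, ppi_aux_var_lin μ _ _ hY2 hfX2 lam, hσ, hτ, hγ]
    -- Zt
    set Zt : Fin N → Ω → ℝ := fun i ω => f (Xt i ω) with hZt_def
    have hZident : ∀ i, IdentDistrib (Zt i) (fun ω => f (X ⟨0, hn⟩ ω)) μ μ :=
      fun i => (hidentt i).comp hf
    have hZ2 : ∀ i, MemLp (Zt i) 2 μ := fun i => (hZident i).symm.memLp_snd hfX2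
    have hZvar : ∀ i, variance (Zt i) μ = τsq := fun i => by
      rw [(hZident i).variance_eq, hτ]
    -- variances of the averaged parts
    have hWsum : variance (fun ω => ∑ i, W i ω) μ = (n:ℝ) * (σsq + lam ^ 2 * τsq - 2 * lam * γ) := by
      have h1 : (fun ω => ∑ i, W i ω) = ∑ i, W i := by funext ω; simp
      rw [h1, IndepFun.variance_sum (fun i _ => hW2 i)
        (fun i _ j _ hij => (hiid.indepFun hij).comp hgl hgl)]
      rw [Finset.sum_congr rfl (fun i _ => hWvar i)]
      simp [Finset.card_univ, mul_comm]
      ring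
    have hZsum : variance (fun ω => ∑ i, Zt i ω) μ = (N:ℝ) * τsq := by
      have h1 : (fun ω => ∑ i, Zt i ω) = ∑ i, Zt i := by funext ω; simp
      rw [h1, IndepFun.variance_sum (fun i _ => hZ2 i)
        (fun i _ j _ hij => (hiidt.indepFun hij).comp hf hf)]
      rw [Finset.sum_congr rfl (fun i _ => hZvar i)]
      simp [Finset.card_univ, mul_comm]
    set A : Ω → ℝ := fun ω => (n:ℝ)⁻¹ * ∑ i, W i ω with hA_def
    set B : Ω → ℝ := fun ω => (lam * (N:ℝ)⁻¹) * ∑ i, Zt i ω with hB_def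
    have hMemA : MemLp A 2 μ := by
      have h := (memLp_finset_sum' (μ := μ) (p := 2) Finset.univ (fun i _ => hW2 i)).const_mul
        ((n:ℝ)⁻¹)
      have e : A = fun x => (n:ℝ)⁻¹ * (∑ i, W i) x := by funext ω; simp [hA_def]
      rw [e]; exact h
    have hMemB : MemLp B 2 μ := by
      have h := (memLp_finset_sum' (μ := μ) (p := 2) Finset.univ (fun i _ => hZ2 i)).const_mul
        (lam * (N:ℝ)⁻¹)
      have e : B = fun x => (lam * (N:ℝ)⁻¹) * (∑ i, Zt i) x := by funext ω; simp [hB_def]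
      rw [e]; exact h
    have hAB : IndepFun A B μ := by
      have hphi : Measurable (fun v : Fin n → 𝒳 × ℝ =>
          (n:ℝ)⁻¹ * ∑ i, ((v i).2 - lam * f (v i).1)) := by
        apply Measurable.const_mul
        apply Finset.measurable_sum
        intro i _
        exact (measurable_snd.comp (measurable_pi_apply i)).sub
          (measurable_const.mul (hf.comp (measurable_fst.comp (measurable_pi_apply i))))
      have hpsi : Measurable (fun v : Fin N → 𝒳 => (lam * (N:ℝ)⁻¹) * ∑ i, f (v i)) := by
        apply Measurable.const_mul
        apply Finset.measurable_sum
        intro i _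
        exact hf.comp (measurable_pi_apply i)
      exact hind.comp hphi hpsi
    have hfun : (fun ω => (n : ℝ)⁻¹ * ∑ i, Y i ω
        + lam * ((N : ℝ)⁻¹ * ∑ i, f (Xt i ω) - (n : ℝ)⁻¹ * ∑ i, f (X i ω))) = A + B := by
      funext ω
      have h5 : ∑ i, W i ω = (∑ i, Y i ω) - lam * ∑ i, f (X i ω) := by
        rw [Finset.mul_sum, ← Finset.sum_sub_distrib]
      simp only [Pi.add_apply, hA_def, hB_def]
      rw [h5]
      ring
    have hvarA : variance A μ = ((n:ℝ)⁻¹) ^ 2 * ((n:ℝ) * (σsq + lam ^ 2 * τsq - 2 * lam * γ)) := by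
      rw [hA_def, variance_const_mul, hWsum]
    have hvarB : variance B μ = (lam * (N:ℝ)⁻¹) ^ 2 * ((N:ℝ) * τsq) := by
      rw [hB_def, variance_const_mul, hZsum]
    rw [hfun, hAB.variance_add hMemA hMemB, hvarA, hvarB]
    field_simp
    ring
  refine ⟨key, fun lam hne => ?_, ?_⟩
  · rw [key lam, key (((N : ℝ) / (n + N)) * (γ / τsq))]
    have ha : (0:ℝ) < ((n + N : ℝ) / (n * N)) * τsq := by positivity
    have hsq : (0:ℝ) < (lam - ((N : ℝ) / (n + N)) * (γ / τsq)) ^ 2 :=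
      sq_pos_iff.mpr (sub_ne_zero.mpr hne)
    have hd : (σsq / n + ((n + N : ℝ) / (n * N)) * lam ^ 2 * τsq - (2 / n) * lam * γ)
        - (σsq / n + ((n + N : ℝ) / (n * N)) * (((N : ℝ) / (n + N)) * (γ / τsq)) ^ 2 * τsq
            - (2 / n) * (((N : ℝ) / (n + N)) * (γ / τsq)) * γ)
        = ((n + N : ℝ) / (n * N)) * τsq * (lam - ((N : ℝ) / (n + N)) * (γ / τsq)) ^ 2 := by
      field_simp
      ring
    nlinarith [mul_pos ha hsq]
  · rw [key (((N : ℝ) / (n + N)) * (γ / τsq))]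
    field_simp
    ring
end

section
/- Let X and Y be real random variables with E[X] = θ, Var(X) = σ², Cov(X, Y) = γ, and E[Y²] < ∞. For c ∈ [0,1] consider the shrinkage estimator θ̂_c = cX + (1−c)Y and define CURE(θ̂_c) = (2c − 1)σ² + 2(1−c)γ + ((1−c)(X − Y))². Then CURE(θ̂_c) is an unbiased estimator of the quadratic risk of θ̂_c: E[CURE(θ̂_c)] = E[(θ̂_c − θ)²]. -/
open MeasureTheory ProbabilityTheory

private lemma l2_mul_integrable {Ω : Type*} [MeasurableSpace Ω] {μ : Measure Ω}
    {f g : Ω → ℝ} (hf : MemLp f 2 μ) (hg : MemLp g 2 μ) :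
    Integrable (fun ω => f ω * g ω) μ := by
  have h1 : Integrable (fun ω => (f ω + g ω) ^ 2) μ := (hf.add hg).integrable_sq
  have h2 : Integrable (fun ω => f ω ^ 2) μ := hf.integrable_sq
  have h3 : Integrable (fun ω => g ω ^ 2) μ := hg.integrable_sq
  have : Integrable (fun ω => ((f ω + g ω) ^ 2 - f ω ^ 2 - g ω ^ 2) / 2) μ :=
    ((h1.sub h2).sub h3).div_const 2
  refine this.congr (Filter.Eventually.of_forall fun ω => ?_)
  ring

/-- **CURE is an unbiased risk estimate** (Theorem B.1).
Let `X, Y` be real random variables with `E[X] = θ`, `Var(X) = σ²`, `Cov(X, Y) = γ`, and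
`E[Y²] < ∞`.  For `c ∈ [0,1]`, the shrinkage estimator `θ̂_c = c X + (1−c) Y` has
`CURE(θ̂_c) = (2c − 1)σ² + 2(1−c)γ + ((1−c)(X − Y))²` as an unbiased estimator of its
quadratic risk: `E[CURE(θ̂_c)] = E[(θ̂_c − θ)²]`. -/
theorem cure_unbiased
    {Ω : Type*} [MeasurableSpace Ω] (μ : Measure Ω) [IsProbabilityMeasure μ]
    (X Y : Ω → ℝ) (hXm : Measurable X) (hYm : Measurable Y)
    (hX2 : MemLp X 2 μ) (hY2 : MemLp Y 2 μ)
    (θ σsq γ : ℝ)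
    (hmean : ∫ ω, X ω ∂μ = θ)
    (hvar : variance X μ = σsq)
    (hcov : ∫ ω, (X ω - ∫ ω', X ω' ∂μ) * (Y ω - ∫ ω', Y ω' ∂μ) ∂μ = γ)
    (c : ℝ) (hc0 : 0 ≤ c) (hc1 : c ≤ 1) :
    ∫ ω, ((2 * c - 1) * σsq + 2 * (1 - c) * γ + ((1 - c) * (X ω - Y ω)) ^ 2) ∂μ
      = ∫ ω, (c * X ω + (1 - c) * Y ω - θ) ^ 2 ∂μ := by
  set n := ∫ ω', Y ω' ∂μ with hn
  have ha2 : MemLp (fun ω => X ω - θ) 2 μ := hX2.sub (memLp_const θ)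
  have hb2 : MemLp (fun ω => Y ω - n) 2 μ := hY2.sub (memLp_const n)
  have hd2 : MemLp (fun ω => X ω - Y ω) 2 μ := hX2.sub hY2
  have hXint : Integrable X μ := hX2.integrable one_le_two
  have haint : Integrable (fun ω => X ω - θ) μ := ha2.integrable one_le_two
  have hdsq : Integrable (fun ω => (X ω - Y ω) ^ 2) μ := hd2.integrable_sq
  have hasq : Integrable (fun ω => (X ω - θ) ^ 2) μ := ha2.integrable_sq
  have had : Integrable (fun ω => (X ω - θ) * (X ω - Y ω)) μ := l2_mul_integrable ha2 hd2
  have hab : Integrable (fun ω => (X ω - θ) * (Y ω - n)) μ := l2_mul_integrable ha2 hb2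
  -- key integrals
  have hIa : ∫ ω, (X ω - θ) ∂μ = 0 := by
    rw [integral_sub hXint (integrable_const θ), hmean, integral_const]
    simp
  have hIasq : ∫ ω, (X ω - θ) ^ 2 ∂μ = σsq := by
    rw [← hvar, variance_eq_integral hX2.aestronglyMeasurable.aemeasurable]
    congr 1
    funext ω
    simp [hmean]
  have hIab : ∫ ω, (X ω - θ) * (Y ω - n) ∂μ = γ := by
    rw [← hcov, hmean]
  have hIad : ∫ ω, (X ω - θ) * (X ω - Y ω) ∂μ = σsq - γ := by
    have hpt : ∀ ω, (X ω - θ) * (X ω - Y ω)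
        = (X ω - θ) ^ 2 - (X ω - θ) * (Y ω - n) + (θ - n) * (X ω - θ) := by
      intro ω; ring
    calc ∫ ω, (X ω - θ) * (X ω - Y ω) ∂μ
        = ∫ ω, ((X ω - θ) ^ 2 - (X ω - θ) * (Y ω - n) + (θ - n) * (X ω - θ)) ∂μ := by
          exact integral_congr_ae (Filter.Eventually.of_forall hpt)
      _ = (∫ ω, (X ω - θ) ^ 2 ∂μ) - (∫ ω, (X ω - θ) * (Y ω - n) ∂μ)
            + (θ - n) * ∫ ω, (X ω - θ) ∂μ := by
          have h1 : Integrable (fun ω => (X ω - θ) ^ 2 - (X ω - θ) * (Y ω - n)) μ :=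
            hasq.sub hab
          have h2 : Integrable (fun ω => (θ - n) * (X ω - θ)) μ := haint.const_mul _
          rw [integral_add h1 h2, integral_sub hasq hab, integral_const_mul]
      _ = σsq - γ := by rw [hIasq, hIab, hIa]; ring
  set D := ∫ ω, (X ω - Y ω) ^ 2 ∂μ with hD
  have hLHS : ∫ ω, ((2 * c - 1) * σsq + 2 * (1 - c) * γ + ((1 - c) * (X ω - Y ω)) ^ 2) ∂μ
      = (2 * c - 1) * σsq + 2 * (1 - c) * γ + (1 - c) ^ 2 * D := by
    have hpt : ∀ ω, (2 * c - 1) * σsq + 2 * (1 - c) * γ + ((1 - c) * (X ω - Y ω)) ^ 2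
        = (2 * c - 1) * σsq + 2 * (1 - c) * γ + (1 - c) ^ 2 * (X ω - Y ω) ^ 2 := by
      intro ω; ring
    calc ∫ ω, ((2 * c - 1) * σsq + 2 * (1 - c) * γ + ((1 - c) * (X ω - Y ω)) ^ 2) ∂μ
        = ∫ ω, ((2 * c - 1) * σsq + 2 * (1 - c) * γ + (1 - c) ^ 2 * (X ω - Y ω) ^ 2) ∂μ := by
          exact integral_congr_ae (Filter.Eventually.of_forall fun ω => hpt ω)
      _ = (2 * c - 1) * σsq + 2 * (1 - c) * γ + (1 - c) ^ 2 * D := by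
          rw [integral_add (integrable_const _) (hdsq.const_mul _), integral_const,
            integral_const_mul]
          simp [hD]
  have hRHS : ∫ ω, (c * X ω + (1 - c) * Y ω - θ) ^ 2 ∂μ
      = σsq - 2 * (1 - c) * (σsq - γ) + (1 - c) ^ 2 * D := by
    have hpt : ∀ ω, (c * X ω + (1 - c) * Y ω - θ) ^ 2
        = (X ω - θ) ^ 2 - 2 * (1 - c) * ((X ω - θ) * (X ω - Y ω))
          + (1 - c) ^ 2 * (X ω - Y ω) ^ 2 := by
      intro ω; ring
    calc ∫ ω, (c * X ω + (1 - c) * Y ω - θ) ^ 2 ∂μ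
        = ∫ ω, ((X ω - θ) ^ 2 - 2 * (1 - c) * ((X ω - θ) * (X ω - Y ω))
            + (1 - c) ^ 2 * (X ω - Y ω) ^ 2) ∂μ := by
          exact integral_congr_ae (Filter.Eventually.of_forall fun ω => hpt ω)
      _ = (∫ ω, (X ω - θ) ^ 2 ∂μ) - 2 * (1 - c) * (∫ ω, (X ω - θ) * (X ω - Y ω) ∂μ)
            + (1 - c) ^ 2 * D := by
          have h1 : Integrable
              (fun ω => (X ω - θ) ^ 2 - 2 * (1 - c) * ((X ω - θ) * (X ω - Y ω))) μ :=
            hasq.sub (had.const_mul _)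
          have h2 : Integrable (fun ω => (1 - c) ^ 2 * (X ω - Y ω) ^ 2) μ := hdsq.const_mul _
          have h3 : Integrable (fun ω => 2 * (1 - c) * ((X ω - θ) * (X ω - Y ω))) μ :=
            had.const_mul _
          rw [integral_add h1 h2, integral_sub hasq h3, integral_const_mul, integral_const_mul]
      _ = σsq - 2 * (1 - c) * (σsq - γ) + (1 - c) ^ 2 * D := by rw [hIasq, hIad]
  rw [hLHS, hRHS]
  ring
end

section
/- In the compound setting, for every ω ≥ 0 and every realization of the latent variables η = (η_1,...,η_m), CURE is an unbiased estimator of the compound risk of the PAS shrinkage family: E_η[CURE(θ̂^PAS_ω)] = R_m(θ̂^PAS_ω, θ), where R_m(θ̂, θ) = E_η[(1/m)Σ_{j=1}^m (θ̂_j − θ_j)²]. -/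
open MeasureTheory ProbabilityTheory

noncomputable section

namespace PASStmt4

variable {Ω : Type*} [MeasurableSpace Ω] {m : ℕ} {n N : Fin m → ℕ}

/-- Mean of the labeled outcomes of problem `j` (here `W j i = (f(X_{ij}), Y_{ij})`). -/
def Ybar (W : (j : Fin m) → Fin (n j) → Ω → ℝ × ℝ) (j : Fin m) (ω : Ω) : ℝ :=
  (n j : ℝ)⁻¹ * ∑ i, (W j i ω).2

/-- Mean of the labeled predictions of problem `j`. -/
def Zbar (W : (j : Fin m) → Fin (n j) → Ω → ℝ × ℝ) (j : Fin m) (ω : Ω) : ℝ :=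
  (n j : ℝ)⁻¹ * ∑ i, (W j i ω).1

/-- Mean of the unlabeled predictions of problem `j`. -/
def Ztil (Zt : (j : Fin m) → Fin (N j) → Ω → ℝ) (j : Fin m) (ω : Ω) : ℝ :=
  (N j : ℝ)⁻¹ * ∑ i, Zt j i ω

/-- The optimal power-tuning parameter `λ*_j = (N_j/(n_j+N_j))·γ_j/τ_j²`. -/
def lamStar (n N : Fin m → ℕ) (τsq γ : Fin m → ℝ) (j : Fin m) : ℝ :=
  ((N j : ℝ) / ((n j : ℝ) + (N j : ℝ))) * (γ j / τsq j)

/-- The power-tuned estimator `θ̂_j^PT = Ȳ_j + λ*_j (Z̃_j − Z̄_j)`. -/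
def PT (W : (j : Fin m) → Fin (n j) → Ω → ℝ × ℝ) (Zt : (j : Fin m) → Fin (N j) → Ω → ℝ)
    (τsq γ : Fin m → ℝ) (j : Fin m) (ω : Ω) : ℝ :=
  Ybar W j ω + lamStar n N τsq γ j * (Ztil Zt j ω - Zbar W j ω)

/-- The variance of the power-tuned estimator,
`σ̃_j² = σ_j²/n_j − N_j γ_j²/(n_j(n_j+N_j)τ_j²)`. -/
def sigTil (n N : Fin m → ℕ) (σsq τsq γ : Fin m → ℝ) (j : Fin m) : ℝ :=
  σsq j / (n j : ℝ) - (N j : ℝ) * (γ j) ^ 2 / ((n j : ℝ) * ((n j : ℝ) + (N j : ℝ)) * τsq j)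

/-- `γ̃_j = Cov(θ̂_j^PT, Z̃_j) = γ_j/(n_j+N_j)`. -/
def gamTil (n N : Fin m → ℕ) (γ : Fin m → ℝ) (j : Fin m) : ℝ :=
  γ j / ((n j : ℝ) + (N j : ℝ))

/-- Shrinkage weight `ω_j = ω/(ω + σ̃_j²)`. -/
def wgt (ωp : ℝ) (s : ℝ) : ℝ := ωp / (ωp + s)

section Helpers
variable {μ : Measure Ω}


lemma mulInt [IsFiniteMeasure μ] {f g : Ω → ℝ} (hf : MemLp f 2 μ) (hg : MemLp g 2 μ) :
    Integrable (fun ω => f ω * g ω) μ := by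
  rw [← memLp_one_iff_integrable]
  have h := hf.smul hg (p := 2) (q := 2) (r := 1)
  simpa [smul_eq_mul, mul_comm, Pi.mul_def] using h

lemma integral_sum_mul {p q : ℕ} (X : Fin p → Ω → ℝ) (Y : Fin q → Ω → ℝ)
    (h : ∀ i k, Integrable (fun ω => X i ω * Y k ω) μ) :
    ∫ ω, (∑ i, X i ω) * (∑ k, Y k ω) ∂μ = ∑ i, ∑ k, ∫ ω, X i ω * Y k ω ∂μ := by
  have e : ∀ ω, (∑ i, X i ω) * (∑ k, Y k ω) = ∑ i, ∑ k, X i ω * Y k ω := by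
    intro ω; rw [Finset.sum_mul_sum]
  simp_rw [e]
  rw [integral_finset_sum _ (fun i _ => integrable_finset_sum _ (fun k _ => h i k))]
  exact Finset.sum_congr rfl fun i _ => integral_finset_sum _ (fun k _ => h i k)

section Quad
variable [IsProbabilityMeasure μ] {X Y Z : Ω → ℝ}

lemma integrable_quad2 (hX : MemLp X 2 μ) (hY : MemLp Y 2 μ) (c1 c2 c3 c4 c5 c6 : ℝ) :
    Integrable (fun ω => c1*(X ω*X ω) + c2*(X ω*Y ω) + c3*(Y ω*Y ω) + c4*X ω + c5*Y ω + c6) μ :=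
  ((((((mulInt hX hX).const_mul c1).add ((mulInt hX hY).const_mul c2)).add
    ((mulInt hY hY).const_mul c3)).add ((hX.integrable one_le_two).const_mul c4)).add
    ((hY.integrable one_le_two).const_mul c5)).add (integrable_const c6)

lemma integral_quad2 (hX : MemLp X 2 μ) (hY : MemLp Y 2 μ) (c1 c2 c3 c4 c5 c6 : ℝ) :
    ∫ ω, (c1*(X ω*X ω) + c2*(X ω*Y ω) + c3*(Y ω*Y ω) + c4*X ω + c5*Y ω + c6) ∂μ
      = c1*(∫ ω, X ω*X ω ∂μ) + c2*(∫ ω, X ω*Y ω ∂μ) + c3*(∫ ω, Y ω*Y ω ∂μ)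
        + c4*(∫ ω, X ω ∂μ) + c5*(∫ ω, Y ω ∂μ) + c6 := by
  have i1 : Integrable (fun ω => c1*(X ω*X ω)) μ := (mulInt hX hX).const_mul c1
  have i2 : Integrable (fun ω => c2*(X ω*Y ω)) μ := (mulInt hX hY).const_mul c2
  have i3 : Integrable (fun ω => c3*(Y ω*Y ω)) μ := (mulInt hY hY).const_mul c3
  have i4 : Integrable (fun ω => c4*X ω) μ := (hX.integrable one_le_two).const_mul c4
  have i5 : Integrable (fun ω => c5*Y ω) μ := (hY.integrable one_le_two).const_mul c5
  have i12 : Integrable (fun ω => c1*(X ω*X ω) + c2*(X ω*Y ω)) μ := i1.add i2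
  have i13 : Integrable (fun ω => c1*(X ω*X ω) + c2*(X ω*Y ω) + c3*(Y ω*Y ω)) μ := i12.add i3
  have i14 : Integrable (fun ω => c1*(X ω*X ω) + c2*(X ω*Y ω) + c3*(Y ω*Y ω) + c4*X ω) μ := i13.add i4
  have i15 : Integrable (fun ω => c1*(X ω*X ω) + c2*(X ω*Y ω) + c3*(Y ω*Y ω) + c4*X ω + c5*Y ω) μ := i14.add i5
  rw [integral_add i15 (integrable_const c6), integral_add i14 i5, integral_add i13 i4,
      integral_add i12 i3, integral_add i1 i2,
      integral_const_mul _ _, integral_const_mul _ _, integral_const_mul _ _, integral_const_mul _ _,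
      integral_const_mul _ _, integral_const]
  simp

lemma integrable_quad3 (hX : MemLp X 2 μ) (hY : MemLp Y 2 μ) (hZ : MemLp Z 2 μ)
    (c1 c2 c3 c4 c5 c6 c7 c8 c9 : ℝ) :
    Integrable (fun ω => c1*(X ω*X ω) + c2*(Y ω*Y ω) + c3*(Z ω*Z ω) + c4*(X ω*Y ω)
      + c5*(X ω*Z ω) + c6*(Y ω*Z ω) + c7*X ω + c8*Y ω + c9*Z ω) μ :=
  ((((((((mulInt hX hX).const_mul c1).add ((mulInt hY hY).const_mul c2)).add
    ((mulInt hZ hZ).const_mul c3)).add ((mulInt hX hY).const_mul c4)).add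
    ((mulInt hX hZ).const_mul c5)).add ((mulInt hY hZ).const_mul c6)).add
    ((hX.integrable one_le_two).const_mul c7)).add
    ((hY.integrable one_le_two).const_mul c8) |>.add
    ((hZ.integrable one_le_two).const_mul c9)

lemma integral_quad3 (hX : MemLp X 2 μ) (hY : MemLp Y 2 μ) (hZ : MemLp Z 2 μ)
    (c1 c2 c3 c4 c5 c6 c7 c8 c9 : ℝ) :
    ∫ ω, (c1*(X ω*X ω) + c2*(Y ω*Y ω) + c3*(Z ω*Z ω) + c4*(X ω*Y ω)
      + c5*(X ω*Z ω) + c6*(Y ω*Z ω) + c7*X ω + c8*Y ω + c9*Z ω) ∂μ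
      = c1*(∫ ω, X ω*X ω ∂μ) + c2*(∫ ω, Y ω*Y ω ∂μ) + c3*(∫ ω, Z ω*Z ω ∂μ)
        + c4*(∫ ω, X ω*Y ω ∂μ) + c5*(∫ ω, X ω*Z ω ∂μ) + c6*(∫ ω, Y ω*Z ω ∂μ)
        + c7*(∫ ω, X ω ∂μ) + c8*(∫ ω, Y ω ∂μ) + c9*(∫ ω, Z ω ∂μ) := by
  have i1 : Integrable (fun ω => c1*(X ω*X ω)) μ := (mulInt hX hX).const_mul c1
  have i2 : Integrable (fun ω => c2*(Y ω*Y ω)) μ := (mulInt hY hY).const_mul c2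
  have i3 : Integrable (fun ω => c3*(Z ω*Z ω)) μ := (mulInt hZ hZ).const_mul c3
  have i4 : Integrable (fun ω => c4*(X ω*Y ω)) μ := (mulInt hX hY).const_mul c4
  have i5 : Integrable (fun ω => c5*(X ω*Z ω)) μ := (mulInt hX hZ).const_mul c5
  have i6 : Integrable (fun ω => c6*(Y ω*Z ω)) μ := (mulInt hY hZ).const_mul c6
  have i7 : Integrable (fun ω => c7*X ω) μ := (hX.integrable one_le_two).const_mul c7
  have i8 : Integrable (fun ω => c8*Y ω) μ := (hY.integrable one_le_two).const_mul c8
  have i9 : Integrable (fun ω => c9*Z ω) μ := (hZ.integrable one_le_two).const_mul c9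
  have i12 : Integrable (fun ω => c1*(X ω*X ω) + c2*(Y ω*Y ω)) μ := i1.add i2
  have i13 : Integrable (fun ω => c1*(X ω*X ω) + c2*(Y ω*Y ω) + c3*(Z ω*Z ω)) μ := i12.add i3
  have i14 : Integrable (fun ω => c1*(X ω*X ω) + c2*(Y ω*Y ω) + c3*(Z ω*Z ω) + c4*(X ω*Y ω)) μ := i13.add i4
  have i15 : Integrable (fun ω => c1*(X ω*X ω) + c2*(Y ω*Y ω) + c3*(Z ω*Z ω) + c4*(X ω*Y ω) + c5*(X ω*Z ω)) μ := i14.add i5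
  have i16 : Integrable (fun ω => c1*(X ω*X ω) + c2*(Y ω*Y ω) + c3*(Z ω*Z ω) + c4*(X ω*Y ω) + c5*(X ω*Z ω) + c6*(Y ω*Z ω)) μ := i15.add i6
  have i17 : Integrable (fun ω => c1*(X ω*X ω) + c2*(Y ω*Y ω) + c3*(Z ω*Z ω) + c4*(X ω*Y ω) + c5*(X ω*Z ω) + c6*(Y ω*Z ω) + c7*X ω) μ := i16.add i7
  have i18 : Integrable (fun ω => c1*(X ω*X ω) + c2*(Y ω*Y ω) + c3*(Z ω*Z ω) + c4*(X ω*Y ω) + c5*(X ω*Z ω) + c6*(Y ω*Z ω) + c7*X ω + c8*Y ω) μ := i17.add i8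
  rw [integral_add i18 i9, integral_add i17 i8, integral_add i16 i7, integral_add i15 i6,
      integral_add i14 i5, integral_add i13 i4, integral_add i12 i3, integral_add i1 i2,
      integral_const_mul _ _, integral_const_mul _ _, integral_const_mul _ _, integral_const_mul _ _,
      integral_const_mul _ _, integral_const_mul _ _, integral_const_mul _ _, integral_const_mul _ _,
      integral_const_mul _ _]

end Quad

lemma arithXX (pr qr τ0 σ0 γ0 lam : ℝ) (hp : pr ≠ 0) (hq : qr ≠ 0) (hpq : pr+qr ≠ 0)
    (hτ : τ0 ≠ 0) (hl : lam = qr/(pr+qr)*(γ0/τ0)) :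
    pr⁻¹*pr⁻¹*(pr*σ0) + lam/pr*(lam/pr)*(pr*τ0) + lam/qr*(lam/qr)*(qr*τ0)
      + -(2*pr⁻¹*(lam/pr))*(pr*γ0) + 2*pr⁻¹*(lam/qr)*0 + -(2*(lam/pr)*(lam/qr))*0
      + 0*0 + 0*0 + 0*0 = σ0/pr - qr*γ0^2/(pr*(pr+qr)*τ0) := by
  subst hl; field_simp; ring

lemma arithXY (pr qr τ0 σ0 γ0 lam : ℝ) (hp : pr ≠ 0) (hq : qr ≠ 0) (hpq : pr+qr ≠ 0)
    (hτ : τ0 ≠ 0) (hl : lam = qr/(pr+qr)*(γ0/τ0)) :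
    0*(pr*σ0) + 0*(pr*τ0) + lam/qr*qr⁻¹*(qr*τ0) + 0*(pr*γ0) + pr⁻¹*qr⁻¹*0
      + -(lam/pr*qr⁻¹)*0 + 0*0 + 0*0 + 0*0 = γ0/(pr+qr) := by
  subst hl; field_simp; ring

lemma arithYY (pr qr τ0 σ0 γ0 : ℝ) (hq : qr ≠ 0) :
    0*(pr*σ0) + 0*(pr*τ0) + qr⁻¹*qr⁻¹*(qr*τ0) + 0*(pr*γ0) + 0*0
      + 0*0 + 0*0 + 0*0 + 0*0 = τ0/qr := by
  field_simp; ring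

section Key
variable {p q : ℕ}

lemma keyj (μ : Measure Ω) [IsProbabilityMeasure μ] (hp : 0 < p) (hq : 0 < q)
    (V : Fin p → Ω → ℝ × ℝ) (C : Fin q → Ω → ℝ)
    (θ0 μ0 τ0 σ0 γ0 : ℝ)
    (hViid : iIndepFun V μ)
    (hCiid : iIndepFun C μ)
    (hVident : ∀ i, IdentDistrib (V i) (V ⟨0, hp⟩) μ μ)
    (hCident : ∀ i, IdentDistrib (C i) (fun ω => (V ⟨0, hp⟩ ω).1) μ μ)
    (hblock : IndepFun (fun ω => fun i => V i ω) (fun ω => fun i => C i ω) μ)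
    (hm2 : ∫ ω, (V ⟨0, hp⟩ ω).2 ∂μ = θ0)
    (hm1 : ∫ ω, (V ⟨0, hp⟩ ω).1 ∂μ = μ0)
    (hv1 : variance (fun ω => (V ⟨0, hp⟩ ω).1) μ = τ0)
    (hv2 : variance (fun ω => (V ⟨0, hp⟩ ω).2) μ = σ0)
    (hcv : ∫ ω, ((V ⟨0, hp⟩ ω).1 - μ0) * ((V ⟨0, hp⟩ ω).2 - θ0) ∂μ = γ0)
    (hLa : MemLp (fun ω => (V ⟨0, hp⟩ ω).1) 2 μ)
    (hLb : MemLp (fun ω => (V ⟨0, hp⟩ ω).2) 2 μ)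
    (hτ : 0 < τ0)
    (T Z : Ω → ℝ) (s g w : ℝ)
    (hT : T = fun ω => (p:ℝ)⁻¹ * ∑ i, (V i ω).2
      + ((q:ℝ)/((p:ℝ)+(q:ℝ)) * (γ0/τ0)) * ((q:ℝ)⁻¹ * ∑ i, C i ω - (p:ℝ)⁻¹ * ∑ i, (V i ω).1))
    (hZ : Z = fun ω => (q:ℝ)⁻¹ * ∑ i, C i ω)
    (hs : s = σ0/(p:ℝ) - (q:ℝ)*γ0^2/((p:ℝ)*((p:ℝ)+(q:ℝ))*τ0))
    (hg : g = γ0/((p:ℝ)+(q:ℝ))) :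
    Integrable (fun ω => (2*w-1)*s + 2*(1-w)*g + (1-w)^2*(T ω - Z ω)^2) μ ∧
    Integrable (fun ω => (w*T ω + (1-w)*Z ω - θ0)^2) μ ∧
    ∫ ω, ((2*w-1)*s + 2*(1-w)*g + (1-w)^2*(T ω - Z ω)^2) ∂μ
      = ∫ ω, (w*T ω + (1-w)*Z ω - θ0)^2 ∂μ := by
  have hp' : (0:ℝ) < (p:ℝ) := by exact_mod_cast hp
  have hq' : (0:ℝ) < (q:ℝ) := by exact_mod_cast hq
  have hpq : (0:ℝ) < (p:ℝ) + (q:ℝ) := by linarith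
  have hτ' : τ0 ≠ 0 := ne_of_gt hτ
  set lam : ℝ := (q:ℝ)/((p:ℝ)+(q:ℝ)) * (γ0/τ0) with hlam
  set v1 : Ω → ℝ := fun ω => (V ⟨0, hp⟩ ω).1 with hv1d
  set v2 : Ω → ℝ := fun ω => (V ⟨0, hp⟩ ω).2 with hv2d
  set a : Fin p → Ω → ℝ := fun i ω => (V i ω).2 - θ0 with hadef
  set b : Fin p → Ω → ℝ := fun i ω => (V i ω).1 - μ0 with hbdef
  set c : Fin q → Ω → ℝ := fun i ω => C i ω - μ0 with hcdef
  -- identically distributed coordinates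
  have ident2 : ∀ i, IdentDistrib (fun ω => (V i ω).2) v2 μ μ :=
    fun i => (hVident i).comp measurable_snd
  have ident1 : ∀ i, IdentDistrib (fun ω => (V i ω).1) v1 μ μ :=
    fun i => (hVident i).comp measurable_fst
  -- MemLp
  have ha2 : ∀ i, MemLp (a i) 2 μ :=
    fun i => ((ident2 i).symm.memLp_snd hLb).sub (memLp_const θ0)
  have hb2 : ∀ i, MemLp (b i) 2 μ :=
    fun i => ((ident1 i).symm.memLp_snd hLa).sub (memLp_const μ0)
  have hc2 : ∀ i, MemLp (c i) 2 μ :=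
    fun i => ((hCident i).symm.memLp_snd hLa).sub (memLp_const μ0)
  -- means are zero
  have Ia : ∀ i, ∫ ω, a i ω ∂μ = 0 := by
    intro i
    have e : ∫ ω, (V i ω).2 ∂μ = θ0 := by
      rw [(ident2 i).integral_eq]; exact hm2
    have : Integrable (fun ω => (V i ω).2) μ :=
      ((ident2 i).symm.memLp_snd hLb).integrable one_le_two
    simp only [hadef]
    rw [integral_sub this (integrable_const θ0), e, integral_const]
    simp
  have Ib : ∀ i, ∫ ω, b i ω ∂μ = 0 := by
    intro i
    have e : ∫ ω, (V i ω).1 ∂μ = μ0 := by rw [(ident1 i).integral_eq]; exact hm1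
    have : Integrable (fun ω => (V i ω).1) μ :=
      ((ident1 i).symm.memLp_snd hLa).integrable one_le_two
    simp only [hbdef]
    rw [integral_sub this (integrable_const μ0), e, integral_const]
    simp
  have Ic : ∀ i, ∫ ω, c i ω ∂μ = 0 := by
    intro i
    have e : ∫ ω, C i ω ∂μ = μ0 := by rw [(hCident i).integral_eq]; exact hm1
    have : Integrable (C i) μ :=
      ((hCident i).symm.memLp_snd hLa).integrable one_le_two
    simp only [hcdef]
    rw [integral_sub this (integrable_const μ0), e, integral_const]
    simp
  -- diagonal second moments
  have base_aa : ∫ ω, (v2 ω - θ0) * (v2 ω - θ0) ∂μ = σ0 := by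
    rw [← hv2, variance_eq_integral hLb.1.aemeasurable, hm2]
    refine integral_congr_ae (ae_of_all _ fun ω => ?_)
    simp [pow_two]
  have base_cc : ∫ ω, (v1 ω - μ0) * (v1 ω - μ0) ∂μ = τ0 := by
    rw [← hv1, variance_eq_integral hLa.1.aemeasurable, hm1]
    refine integral_congr_ae (ae_of_all _ fun ω => ?_)
    simp [pow_two]
  have Iaa : ∀ i, ∫ ω, a i ω * a i ω ∂μ = σ0 := by
    intro i
    have hu : Measurable (fun z : ℝ × ℝ => (z.2 - θ0) * (z.2 - θ0)) := by fun_prop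
    have e := ((hVident i).comp hu).integral_eq
    simpa using e.trans base_aa
  have Ibb : ∀ i, ∫ ω, b i ω * b i ω ∂μ = τ0 := by
    intro i
    have hu : Measurable (fun z : ℝ × ℝ => (z.1 - μ0) * (z.1 - μ0)) := by fun_prop
    have e := ((hVident i).comp hu).integral_eq
    simpa using e.trans base_cc
  have Icc : ∀ i, ∫ ω, c i ω * c i ω ∂μ = τ0 := by
    intro i
    have hu : Measurable (fun t : ℝ => (t - μ0) * (t - μ0)) := by fun_prop
    have e := ((hCident i).comp hu).integral_eq
    simpa using e.trans base_cc
  have Iab : ∀ i, ∫ ω, a i ω * b i ω ∂μ = γ0 := by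
    intro i
    have hu : Measurable (fun z : ℝ × ℝ => (z.2 - θ0) * (z.1 - μ0)) := by fun_prop
    have e := ((hVident i).comp hu).integral_eq
    have base : ∫ ω, (v2 ω - θ0) * (v1 ω - μ0) ∂μ = γ0 := by
      rw [← hcv]
      refine integral_congr_ae (ae_of_all _ fun ω => ?_)
      ring
    simpa using e.trans base
  -- off-diagonal : independence within the labeled sample
  have hu2 : Measurable (fun z : ℝ × ℝ => z.2 - θ0) := by fun_prop
  have hu1 : Measurable (fun z : ℝ × ℝ => z.1 - μ0) := by fun_prop
  have hut : Measurable (fun t : ℝ => t - μ0) := by fun_prop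
  have Iaa0 : ∀ i k, i ≠ k → ∫ ω, a i ω * a k ω ∂μ = 0 := by
    intro i k hik
    have ind : IndepFun (a i) (a k) μ := (hViid.indepFun hik).comp hu2 hu2
    have e := ind.integral_mul_eq_mul_integral (ha2 i).1 (ha2 k).1
    have : ∫ ω, a i ω * a k ω ∂μ = (∫ ω, a i ω ∂μ) * ∫ ω, a k ω ∂μ := e
    rw [this, Ia i, Ia k, mul_zero]
  have Ibb0 : ∀ i k, i ≠ k → ∫ ω, b i ω * b k ω ∂μ = 0 := by
    intro i k hik
    have ind : IndepFun (b i) (b k) μ := (hViid.indepFun hik).comp hu1 hu1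
    have : ∫ ω, b i ω * b k ω ∂μ = (∫ ω, b i ω ∂μ) * ∫ ω, b k ω ∂μ :=
      ind.integral_mul_eq_mul_integral (hb2 i).1 (hb2 k).1
    rw [this, Ib i, Ib k, mul_zero]
  have Icc0 : ∀ i k, i ≠ k → ∫ ω, c i ω * c k ω ∂μ = 0 := by
    intro i k hik
    have ind : IndepFun (c i) (c k) μ := (hCiid.indepFun hik).comp hut hut
    have : ∫ ω, c i ω * c k ω ∂μ = (∫ ω, c i ω ∂μ) * ∫ ω, c k ω ∂μ :=
      ind.integral_mul_eq_mul_integral (hc2 i).1 (hc2 k).1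
    rw [this, Ic i, Ic k, mul_zero]
  have Iab0 : ∀ i k, i ≠ k → ∫ ω, a i ω * b k ω ∂μ = 0 := by
    intro i k hik
    have ind : IndepFun (a i) (b k) μ := (hViid.indepFun hik).comp hu2 hu1
    have : ∫ ω, a i ω * b k ω ∂μ = (∫ ω, a i ω ∂μ) * ∫ ω, b k ω ∂μ :=
      ind.integral_mul_eq_mul_integral (ha2 i).1 (hb2 k).1
    rw [this, Ia i, Ib k, mul_zero]
  -- cross-block zeros
  have Iac : ∀ (i : Fin p) (k : Fin q), ∫ ω, a i ω * c k ω ∂μ = 0 := by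
    intro i k
    have ind : IndepFun (a i) (c k) μ :=
      hblock.comp (hu2.comp (measurable_pi_apply i)) (hut.comp (measurable_pi_apply k))
    have : ∫ ω, a i ω * c k ω ∂μ = (∫ ω, a i ω ∂μ) * ∫ ω, c k ω ∂μ :=
      ind.integral_mul_eq_mul_integral (ha2 i).1 (hc2 k).1
    rw [this, Ia i, zero_mul]
  have Ibc : ∀ (i : Fin p) (k : Fin q), ∫ ω, b i ω * c k ω ∂μ = 0 := by
    intro i k
    have ind : IndepFun (b i) (c k) μ :=
      hblock.comp (hu1.comp (measurable_pi_apply i)) (hut.comp (measurable_pi_apply k))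
    have : ∫ ω, b i ω * c k ω ∂μ = (∫ ω, b i ω ∂μ) * ∫ ω, c k ω ∂μ :=
      ind.integral_mul_eq_mul_integral (hb2 i).1 (hc2 k).1
    rw [this, Ib i, zero_mul]
  -- sums
  set P : Ω → ℝ := fun ω => ∑ i, a i ω with hPdef
  set Q : Ω → ℝ := fun ω => ∑ i, b i ω with hQdef
  set R : Ω → ℝ := fun ω => ∑ i, c i ω with hRdef
  have hP2 : MemLp P 2 μ := memLp_finset_sum _ (fun i _ => ha2 i)
  have hQ2 : MemLp Q 2 μ := memLp_finset_sum _ (fun i _ => hb2 i)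
  have hR2 : MemLp R 2 μ := memLp_finset_sum _ (fun i _ => hc2 i)
  have IP : ∫ ω, P ω ∂μ = 0 := by
    simp only [hPdef]
    rw [integral_finset_sum _ (fun i _ => (ha2 i).integrable one_le_two)]
    simp [Ia]
  have IQ : ∫ ω, Q ω ∂μ = 0 := by
    simp only [hQdef]
    rw [integral_finset_sum _ (fun i _ => (hb2 i).integrable one_le_two)]
    simp [Ib]
  have IR : ∫ ω, R ω ∂μ = 0 := by
    simp only [hRdef]
    rw [integral_finset_sum _ (fun i _ => (hc2 i).integrable one_le_two)]
    simp [Ic]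
  have IPP : ∫ ω, P ω * P ω ∂μ = (p:ℝ) * σ0 := by
    simp only [hPdef]
    rw [integral_sum_mul a a (fun i k => mulInt (ha2 i) (ha2 k))]
    have : ∀ i ∈ Finset.univ, ∑ k, ∫ ω, a i ω * a k ω ∂μ = σ0 := by
      intro i _
      rw [Finset.sum_eq_single i (fun k _ hk => Iaa0 i k (Ne.symm hk)) (by simp)]
      exact Iaa i
    rw [Finset.sum_congr rfl this]
    simp [mul_comm]
  have IQQ : ∫ ω, Q ω * Q ω ∂μ = (p:ℝ) * τ0 := by
    simp only [hQdef]
    rw [integral_sum_mul b b (fun i k => mulInt (hb2 i) (hb2 k))]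
    have : ∀ i ∈ Finset.univ, ∑ k, ∫ ω, b i ω * b k ω ∂μ = τ0 := by
      intro i _
      rw [Finset.sum_eq_single i (fun k _ hk => Ibb0 i k (Ne.symm hk)) (by simp)]
      exact Ibb i
    rw [Finset.sum_congr rfl this]
    simp [mul_comm]
  have IRR : ∫ ω, R ω * R ω ∂μ = (q:ℝ) * τ0 := by
    simp only [hRdef]
    rw [integral_sum_mul c c (fun i k => mulInt (hc2 i) (hc2 k))]
    have : ∀ i ∈ Finset.univ, ∑ k, ∫ ω, c i ω * c k ω ∂μ = τ0 := by
      intro i _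
      rw [Finset.sum_eq_single i (fun k _ hk => Icc0 i k (Ne.symm hk)) (by simp)]
      exact Icc i
    rw [Finset.sum_congr rfl this]
    simp [mul_comm]
  have IPQ : ∫ ω, P ω * Q ω ∂μ = (p:ℝ) * γ0 := by
    simp only [hPdef, hQdef]
    rw [integral_sum_mul a b (fun i k => mulInt (ha2 i) (hb2 k))]
    have : ∀ i ∈ Finset.univ, ∑ k, ∫ ω, a i ω * b k ω ∂μ = γ0 := by
      intro i _
      rw [Finset.sum_eq_single i (fun k _ hk => Iab0 i k (Ne.symm hk)) (by simp)]
      exact Iab i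
    rw [Finset.sum_congr rfl this]
    simp [mul_comm]
  have IPR : ∫ ω, P ω * R ω ∂μ = 0 := by
    simp only [hPdef, hRdef]
    rw [integral_sum_mul a c (fun i k => mulInt (ha2 i) (hc2 k))]
    simp [Iac]
  have IQR : ∫ ω, Q ω * R ω ∂μ = 0 := by
    simp only [hQdef, hRdef]
    rw [integral_sum_mul b c (fun i k => mulInt (hb2 i) (hc2 k))]
    simp [Ibc]
  -- the centered estimator and centered unlabeled mean
  set X : Ω → ℝ := fun ω => (p:ℝ)⁻¹ * P ω - lam/(p:ℝ) * Q ω + lam/(q:ℝ) * R ω with hXdef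
  set Y : Ω → ℝ := fun ω => (q:ℝ)⁻¹ * R ω with hYdef
  have hX2 : MemLp X 2 μ :=
    ((hP2.const_mul _).sub (hQ2.const_mul _)).add (hR2.const_mul _)
  have hY2 : MemLp Y 2 μ := hR2.const_mul _
  clear_value lam v1 v2 a b c P Q R X Y
  have IX : ∫ ω, X ω ∂μ = 0 := by
    have e : ∀ ω, X ω = 0*(P ω*P ω) + 0*(Q ω*Q ω) + 0*(R ω*R ω) + 0*(P ω*Q ω)
        + 0*(P ω*R ω) + 0*(Q ω*R ω) + (p:ℝ)⁻¹*P ω + (-(lam/(p:ℝ)))*Q ω + (lam/(q:ℝ))*R ω := by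
      intro ω; simp only [hXdef]; ring
    rw [integral_congr_ae (ae_of_all _ e), integral_quad3 hP2 hQ2 hR2, IPP, IQQ, IRR, IPQ, IPR, IQR, IP, IQ, IR]
    ring
  have IY : ∫ ω, Y ω ∂μ = 0 := by
    have e : ∀ ω, Y ω = 0*(P ω*P ω) + 0*(Q ω*Q ω) + 0*(R ω*R ω) + 0*(P ω*Q ω)
        + 0*(P ω*R ω) + 0*(Q ω*R ω) + 0*P ω + 0*Q ω + (q:ℝ)⁻¹*R ω := by
      intro ω; simp only [hYdef]; ring
    rw [integral_congr_ae (ae_of_all _ e), integral_quad3 hP2 hQ2 hR2, IPP, IQQ, IRR, IPQ, IPR, IQR, IP, IQ, IR]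
    ring
  have IXX : ∫ ω, X ω * X ω ∂μ = s := by
    have e : ∀ ω, X ω * X ω = ((p:ℝ)⁻¹*(p:ℝ)⁻¹)*(P ω*P ω) + (lam/(p:ℝ)*(lam/(p:ℝ)))*(Q ω*Q ω)
        + (lam/(q:ℝ)*(lam/(q:ℝ)))*(R ω*R ω) + (-(2*(p:ℝ)⁻¹*(lam/(p:ℝ))))*(P ω*Q ω)
        + (2*(p:ℝ)⁻¹*(lam/(q:ℝ)))*(P ω*R ω) + (-(2*(lam/(p:ℝ))*(lam/(q:ℝ))))*(Q ω*R ω)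
        + 0*P ω + 0*Q ω + 0*R ω := by
      intro ω; simp only [hXdef]; ring
    rw [integral_congr_ae (ae_of_all _ e), integral_quad3 hP2 hQ2 hR2,
      IPP, IQQ, IRR, IPQ, IPR, IQR, IP, IQ, IR, hs]
    exact arithXX _ _ _ _ _ _ (ne_of_gt hp') (ne_of_gt hq') (ne_of_gt hpq) hτ' hlam
  have IXY : ∫ ω, X ω * Y ω ∂μ = g := by
    have e : ∀ ω, X ω * Y ω = 0*(P ω*P ω) + 0*(Q ω*Q ω)
        + (lam/(q:ℝ)*(q:ℝ)⁻¹)*(R ω*R ω) + 0*(P ω*Q ω)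
        + ((p:ℝ)⁻¹*(q:ℝ)⁻¹)*(P ω*R ω) + (-(lam/(p:ℝ)*(q:ℝ)⁻¹))*(Q ω*R ω)
        + 0*P ω + 0*Q ω + 0*R ω := by
      intro ω; simp only [hXdef, hYdef]; ring
    rw [integral_congr_ae (ae_of_all _ e), integral_quad3 hP2 hQ2 hR2,
      IPP, IQQ, IRR, IPQ, IPR, IQR, IP, IQ, IR, hg]
    exact arithXY _ _ _ σ0 _ _ (ne_of_gt hp') (ne_of_gt hq') (ne_of_gt hpq) hτ' hlam
  have IYY : ∫ ω, Y ω * Y ω ∂μ = τ0/(q:ℝ) := by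
    have e : ∀ ω, Y ω * Y ω = 0*(P ω*P ω) + 0*(Q ω*Q ω)
        + ((q:ℝ)⁻¹*(q:ℝ)⁻¹)*(R ω*R ω) + 0*(P ω*Q ω)
        + 0*(P ω*R ω) + 0*(Q ω*R ω) + 0*P ω + 0*Q ω + 0*R ω := by
      intro ω; simp only [hYdef]; ring
    rw [integral_congr_ae (ae_of_all _ e), integral_quad3 hP2 hQ2 hR2, IPP, IQQ, IRR, IPQ, IPR, IQR, IP, IQ, IR]
    exact arithYY _ _ _ σ0 γ0 (ne_of_gt hq')
  -- identify T and Z with the centered variables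
  have hTX : ∀ ω, T ω = X ω + θ0 := by
    intro ω
    simp only [hT, hXdef, hPdef, hQdef, hRdef, hadef, hbdef, hcdef]
    simp only [Finset.sum_sub_distrib, Finset.sum_const, Finset.card_univ,
      Fintype.card_fin, nsmul_eq_mul]
    field_simp
    ring
  have hZY : ∀ ω, Z ω = Y ω + μ0 := by
    intro ω
    simp only [hZ, hYdef, hRdef, hcdef]
    simp only [Finset.sum_sub_distrib, Finset.sum_const, Finset.card_univ,
      Fintype.card_fin, nsmul_eq_mul]
    field_simp
    ring
  have eL : ∀ ω, (2*w-1)*s + 2*(1-w)*g + (1-w)^2*(T ω - Z ω)^2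
      = ((1-w)^2)*(X ω*X ω) + (-(2*(1-w)^2))*(X ω*Y ω) + ((1-w)^2)*(Y ω*Y ω)
        + (2*(θ0-μ0)*(1-w)^2)*X ω + (-(2*(θ0-μ0)*(1-w)^2))*Y ω
        + ((2*w-1)*s + 2*(1-w)*g + (1-w)^2*(θ0-μ0)^2) := by
    intro ω; rw [hTX ω, hZY ω]; ring
  have eR : ∀ ω, (w*T ω + (1-w)*Z ω - θ0)^2
      = (w^2)*(X ω*X ω) + (2*w*(1-w))*(X ω*Y ω) + ((1-w)^2)*(Y ω*Y ω)
        + (-(2*w*(1-w)*(θ0-μ0)))*X ω + (-(2*(1-w)^2*(θ0-μ0)))*Y ω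
        + ((1-w)^2*(θ0-μ0)^2) := by
    intro ω; rw [hTX ω, hZY ω]; ring
  have intL := integrable_quad2 hX2 hY2 ((1-w)^2) (-(2*(1-w)^2)) ((1-w)^2)
    (2*(θ0-μ0)*(1-w)^2) (-(2*(θ0-μ0)*(1-w)^2))
    ((2*w-1)*s + 2*(1-w)*g + (1-w)^2*(θ0-μ0)^2)
  have intR := integrable_quad2 hX2 hY2 (w^2) (2*w*(1-w)) ((1-w)^2)
    (-(2*w*(1-w)*(θ0-μ0))) (-(2*(1-w)^2*(θ0-μ0))) ((1-w)^2*(θ0-μ0)^2)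
  refine ⟨intL.congr (ae_of_all _ fun ω => (eL ω).symm),
    intR.congr (ae_of_all _ fun ω => (eR ω).symm), ?_⟩
  rw [integral_congr_ae (ae_of_all _ eL), integral_congr_ae (ae_of_all _ eR),
    integral_quad2 hX2 hY2, integral_quad2 hX2 hY2, IXX, IXY, IYY, IX, IY]
  ring

end Key
end Helpers

/-- **CURE is an unbiased estimator of the compound risk of the PAS family**
(Theorem `gsure-PAS`).  In the compound setting, for every `ω ≥ 0` and every realization
of the latent variables (here: every fixed collection of per-problem moments
`θ_j, μ_j, τ_j², σ_j², γ_j` and conditional data-generating mechanism),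
`E[CURE(θ̂^PAS_ω)] = R_m(θ̂^PAS_ω, θ)`. -/
theorem cure_unbiased_compound
    (μ : Measure Ω) [IsProbabilityMeasure μ]
    (hn : ∀ j, 0 < n j) (hN : ∀ j, 0 < N j)
    (W : (j : Fin m) → Fin (n j) → Ω → ℝ × ℝ) (Zt : (j : Fin m) → Fin (N j) → Ω → ℝ)
    (θ μf τsq σsq γ : Fin m → ℝ)
    (hWmeas : ∀ j i, Measurable (W j i)) (hZtmeas : ∀ j i, Measurable (Zt j i))
    -- within each problem, the labeled pairs are iid, the unlabeled predictions are iid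
    -- copies of the labeled predictions, and labeled and unlabeled parts are independent
    (hWiid : ∀ j, iIndepFun (W j) μ)
    (hZtiid : ∀ j, iIndepFun (Zt j) μ)
    (hWident : ∀ j i, IdentDistrib (W j i) (W j ⟨0, hn j⟩) μ μ)
    (hZtident : ∀ j i, IdentDistrib (Zt j i) (fun ω => (W j ⟨0, hn j⟩ ω).1) μ μ)
    (hblock : ∀ j, IndepFun (fun ω => fun i => W j i ω) (fun ω => fun i => Zt j i ω) μ)
    -- distinct problems are independent
    (hacross : iIndepFun
      (fun j ω => ((fun i => W j i ω), (fun i => Zt j i ω))) μ)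
    -- first and second moments, conditional on the latent variables
    (hmom : ∀ j,
      (∫ ω, (W j ⟨0, hn j⟩ ω).2 ∂μ = θ j)
      ∧ (∫ ω, (W j ⟨0, hn j⟩ ω).1 ∂μ = μf j)
      ∧ variance (fun ω => (W j ⟨0, hn j⟩ ω).1) μ = τsq j
      ∧ variance (fun ω => (W j ⟨0, hn j⟩ ω).2) μ = σsq j
      ∧ ∫ ω, ((W j ⟨0, hn j⟩ ω).1 - μf j) * ((W j ⟨0, hn j⟩ ω).2 - θ j) ∂μ = γ j)
    (hL2 : ∀ j, MemLp (fun ω => (W j ⟨0, hn j⟩ ω).1) 2 μ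
      ∧ MemLp (fun ω => (W j ⟨0, hn j⟩ ω).2) 2 μ)
    (hτpos : ∀ j, 0 < τsq j) :
    ∀ ωp : ℝ, 0 ≤ ωp →
      ∫ ω, ((m : ℝ)⁻¹ * ∑ j,
          ((2 * wgt ωp (sigTil n N σsq τsq γ j) - 1) * sigTil n N σsq τsq γ j
            + 2 * (1 - wgt ωp (sigTil n N σsq τsq γ j)) * gamTil n N γ j
            + (1 - wgt ωp (sigTil n N σsq τsq γ j)) ^ 2
              * (PT W Zt τsq γ j ω - Ztil Zt j ω) ^ 2)) ∂μ
      = ∫ ω, ((m : ℝ)⁻¹ * ∑ j,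
          (wgt ωp (sigTil n N σsq τsq γ j) * PT W Zt τsq γ j ω
            + (1 - wgt ωp (sigTil n N σsq τsq γ j)) * Ztil Zt j ω - θ j) ^ 2) ∂μ := by
  intro ωp hωp
  have key : ∀ j : Fin m,
      Integrable (fun ω => (2 * wgt ωp (sigTil n N σsq τsq γ j) - 1) * sigTil n N σsq τsq γ j
        + 2 * (1 - wgt ωp (sigTil n N σsq τsq γ j)) * gamTil n N γ j
        + (1 - wgt ωp (sigTil n N σsq τsq γ j)) ^ 2
          * (PT W Zt τsq γ j ω - Ztil Zt j ω) ^ 2) μ ∧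
      Integrable (fun ω => (wgt ωp (sigTil n N σsq τsq γ j) * PT W Zt τsq γ j ω
        + (1 - wgt ωp (sigTil n N σsq τsq γ j)) * Ztil Zt j ω - θ j) ^ 2) μ ∧
      ∫ ω, ((2 * wgt ωp (sigTil n N σsq τsq γ j) - 1) * sigTil n N σsq τsq γ j
        + 2 * (1 - wgt ωp (sigTil n N σsq τsq γ j)) * gamTil n N γ j
        + (1 - wgt ωp (sigTil n N σsq τsq γ j)) ^ 2
          * (PT W Zt τsq γ j ω - Ztil Zt j ω) ^ 2) ∂μ
      = ∫ ω, (wgt ωp (sigTil n N σsq τsq γ j) * PT W Zt τsq γ j ω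
        + (1 - wgt ωp (sigTil n N σsq τsq γ j)) * Ztil Zt j ω - θ j) ^ 2 ∂μ := by
    intro j
    exact keyj μ (hn j) (hN j) (W j) (Zt j) (θ j) (μf j) (τsq j) (σsq j) (γ j)
      (hWiid j) (hZtiid j) (hWident j) (hZtident j) (hblock j)
      (hmom j).1 (hmom j).2.1 (hmom j).2.2.1 (hmom j).2.2.2.1 (hmom j).2.2.2.2
      (hL2 j).1 (hL2 j).2 (hτpos j)
      (PT W Zt τsq γ j) (Ztil Zt j) (sigTil n N σsq τsq γ j) (gamTil n N γ j)
      (wgt ωp (sigTil n N σsq τsq γ j)) rfl rfl rfl rfl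
  rw [integral_const_mul, integral_const_mul,
    integral_finset_sum _ (fun j _ => (key j).1),
    integral_finset_sum _ (fun j _ => (key j).2.1)]
  congr 1
  exact Finset.sum_congr rfl fun j _ => (key j).2.2


end PASStmt4
end
end
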